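/- Flow (semigroup) property of the positive reflection map (Proposition on the reflection map, part (ii)): Let r0, z ∈ ℝ and let β : ℝ → ℝ be bounded on [r0, r] for every r ≥ r0. Fix r' ≥ r0 and set y = (Γ^{+,z}β)(r'). Then for every r ≥ r', (Γ^{+,z}β)(r) = y + β(r) − β(r') + sup_{v ∈ [r', r]} max(z − (y + β(v) − β(r')), 0); that is, on [r', ∞) the path (Γ^{+,z}β) coincides with the positive reflection map at z, based at r', applied to the shifted path u ↦ y + β(u) − β(r'). -/

import Mathlib

/-- Positive reflection map at level `z`, based at `r0`:
`(Γ^{+,z}β)(r) = β(r) + sup_{u ∈ [r0, r]} max(z − β(u), 0)`. -/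
noncomputable def posRefl (r0 z : ℝ) (β : ℝ → ℝ) (r : ℝ) : ℝ :=
  β r + sSup ((fun u => max (z - β u) 0) '' Set.Icc r0 r)

/-- Flow (semigroup) property of the positive reflection map: for `r0 ≤ r' ≤ r`, with
`y = (Γ^{+,z}β)(r')`,
`(Γ^{+,z}β)(r) = y + β(r) − β(r') + sup_{v ∈ [r', r]} max(z − (y + β(v) − β(r')), 0)`,
i.e. on `[r', ∞)` the reflected path coincides with the positive reflection map at `z` based
at `r'` applied to the shifted path `u ↦ y + β(u) − β(r')`. -/
theorem posRefl_flow (r0 z : ℝ) (β : ℝ → ℝ)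
    (hβ : ∀ r, r0 ≤ r → ∃ M, ∀ u ∈ Set.Icc r0 r, |β u| ≤ M)
    (r' : ℝ) (hr' : r0 ≤ r') (y : ℝ) (hy : y = posRefl r0 z β r') :
    ∀ r, r' ≤ r →
      posRefl r0 z β r = posRefl r' z (fun u => y + β u - β r') r := by
  intro r hrr
  have hr0r : r0 ≤ r := hr'.trans hrr
  set f : ℝ → ℝ := fun u => max (z - β u) 0 with hf
  obtain ⟨M, hM⟩ := hβ r hr0r
  have hM0 : 0 ≤ M := (abs_nonneg _).trans (hM r0 ⟨le_refl _, hr0r⟩)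
  have hbdd : BddAbove (f '' Set.Icc r0 r) := by
    refine ⟨|z| + M, ?_⟩
    rintro x ⟨u, hu, rfl⟩
    have h := abs_le.mp (hM u hu)
    have hz := le_abs_self z
    have hz' := abs_nonneg z
    simp only [hf]
    exact max_le (by linarith [h.1]) (by linarith)
  set A : Set ℝ := f '' Set.Icc r0 r' with hA
  set B : Set ℝ := f '' Set.Icc r' r with hB
  have hA_ne : A.Nonempty := (Set.nonempty_Icc.mpr hr').image f
  have hB_ne : B.Nonempty := (Set.nonempty_Icc.mpr hrr).image f
  have hA_bdd : BddAbove A :=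
    hbdd.mono (Set.image_mono (f := f) (Set.Icc_subset_Icc_right hrr))
  have hB_bdd : BddAbove B :=
    hbdd.mono (Set.image_mono (f := f) (Set.Icc_subset_Icc_left hr'))
  have hunion : f '' Set.Icc r0 r = A ∪ B := by
    rw [hA, hB, ← Set.image_union, Set.Icc_union_Icc_eq_Icc hr' hrr]
  have hS : sSup (f '' Set.Icc r0 r) = max (sSup A) (sSup B) := by
    rw [hunion]
    exact csSup_union hA_bdd hA_ne hB_bdd hB_ne
  have hS'0 : 0 ≤ sSup A := by
    have h1 : f r' ∈ A := ⟨r', ⟨hr', le_refl _⟩, rfl⟩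
    exact le_trans (le_max_right _ _) (le_csSup hA_bdd h1)
  have hy' : y = β r' + sSup A := by rw [hy]; rfl
  have key : ∀ a c : ℝ, 0 ≤ c → max (a - c) 0 = max (max a 0 - c) 0 := by
    intro a c hc
    rcases le_total a 0 with h | h
    · rw [max_eq_right h, max_eq_right (by linarith), max_eq_right (by linarith)]
    · rw [max_eq_left h]
  have himg : (fun v => max (z - (y + β v - β r')) 0) '' Set.Icc r' r
      = (fun x => max (x - sSup A) 0) '' B := by
    rw [hB, Set.image_image]
    apply Set.image_congr
    intro v _
    have : z - (y + β v - β r') = (z - β v) - sSup A := by rw [hy']; ring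
    rw [this, key _ _ hS'0]
  have hmono : Monotone (fun x : ℝ => max (x - sSup A) 0) :=
    fun a b hab => max_le_max (by simpa using hab) le_rfl
  have hcont : ContinuousAt (fun x : ℝ => max (x - sSup A) 0) (sSup B) :=
    ((continuous_id.sub continuous_const).max continuous_const).continuousAt
  have hsup : sSup ((fun x => max (x - sSup A) 0) '' B)
      = max (sSup B - sSup A) 0 :=
    (Monotone.map_csSup_of_continuousAt hcont hmono hB_ne hB_bdd).symm
  show β r + sSup (f '' Set.Icc r0 r)
      = (y + β r - β r') + sSup ((fun v => max (z - (y + β v - β r')) 0) '' Set.Icc r' r)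
  rw [himg, hsup, hS, hy']
  rcases le_total (sSup B) (sSup A) with h | h
  · rw [max_eq_left h, max_eq_right (by linarith)]; ring
  · rw [max_eq_right h, max_eq_left (by linarith)]; ring
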